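/- Let A be an n × n matrix with entries in {+1, -1} and let m be an integer with n ≥ m > 1. Then the sum of det(M)² over all m × m submatrices M of A (obtained by choosing m rows and m columns of A) is at most n^m · C(n,m), where C(n,m) is the binomial coefficient. Equivalently, the mean value of det(M)² over all C(n,m)² such submatrices is at most n^m / C(n,m). -/

import Mathlib

open Finset Matrix

/-- Injective maps `Fin m → Fin n` factor uniquely as a strictly monotone map
composed with a permutation. -/
noncomputable def monoPermEquiv (m n : ℕ) :
    Equiv.Perm (Fin m) × {g : Fin m → Fin n // StrictMono g} ≃
      {g : Fin m → Fin n // Function.Injective g} :=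
  Equiv.ofBijective
    (fun p => ⟨p.2.1 ∘ p.1, p.2.2.injective.comp p.1.injective⟩)
    (by
      constructor
      · rintro ⟨σ, g, hg⟩ ⟨τ, g', hg'⟩ h
        simp only [Subtype.mk.injEq] at h
        have hr : Set.range (g ∘ σ) = Set.range (g' ∘ τ) := by rw [h]
        rw [σ.surjective.range_comp, τ.surjective.range_comp] at hr
        have hwf : WellFoundedLT (Fin m) := inferInstance
        have hgg' : g = g' := (StrictMono.range_inj hg hg').mp hr
        subst hgg'
        have : ⇑σ = ⇑τ := by
          funext i
          exact hg.injective (congrFun h i)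
        simp [Prod.ext_iff, Equiv.coe_fn_injective this]
      · rintro ⟨g, hg⟩
        set s : Finset (Fin n) := Finset.image g Finset.univ with hs_def
        have hs : s.card = m := by
          rw [hs_def, Finset.card_image_of_injective _ hg, Finset.card_univ, Fintype.card_fin]
        have hmem : ∀ j, g j ∈ s := fun j => Finset.mem_image_of_mem _ (Finset.mem_univ j)
        set e := s.orderIsoOfFin hs with he
        have hσinj : Function.Injective fun j => e.symm ⟨g j, hmem j⟩ := by
          intro a b hab
          apply hg
          have := congrArg (fun x => ((e x : s) : Fin n)) hab
          simpa using this
        let σ : Equiv.Perm (Fin m) :=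
          Equiv.ofBijective _ ((Finite.injective_iff_bijective).mp hσinj)
        refine ⟨⟨σ, ⟨fun j => (e j : Fin n), fun a b hab => by
          exact Subtype.coe_lt_coe.mpr (e.lt_iff_lt.mpr hab)⟩⟩,
          Subtype.ext (funext fun j => ?_)⟩
        show ((e (σ j) : s) : Fin n) = g j
        simp [σ, Equiv.ofBijective_apply])

lemma card_strictMono_fin (m n : ℕ) :
    Fintype.card {g : Fin m → Fin n // StrictMono g} = n.choose m := by
  have h1 : Fintype.card (Equiv.Perm (Fin m) × {g : Fin m → Fin n // StrictMono g})
      = Fintype.card {g : Fin m → Fin n // Function.Injective g} :=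
    Fintype.card_congr (monoPermEquiv m n)
  rw [Fintype.card_prod, Fintype.card_perm, Fintype.card_fin] at h1
  have h2 : Fintype.card {g : Fin m → Fin n // Function.Injective g}
      = Fintype.card (Fin m ↪ Fin n) :=
    Fintype.card_congr (Equiv.subtypeInjectiveEquivEmbedding _ _)
  rw [h2, Fintype.card_embedding_eq, Fintype.card_fin, Fintype.card_fin,
    Nat.descFactorial_eq_factorial_mul_choose] at h1
  exact Nat.eq_of_mul_eq_mul_left (Nat.factorial_pos m) h1

lemma cauchy_binet_sq (m n : ℕ) (B : Matrix (Fin m) (Fin n) ℤ) :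
    ∑ g : Fin m → Fin n, ((B.submatrix id g).det) ^ 2
      = (Nat.factorial m : ℤ) * (B * Bᵀ).det := by
  have key : ∀ g : Fin m → Fin n, (B.submatrix id g).det ^ 2
      = ∑ σ : Equiv.Perm (Fin m), ∑ τ : Equiv.Perm (Fin m),
          ((Equiv.Perm.sign σ : ℤ) * (Equiv.Perm.sign τ : ℤ)) *
            ∏ j, B (σ j) (g j) * B (τ j) (g j) := by
    intro g
    rw [Matrix.det_apply', sq, Finset.sum_mul_sum]
    refine Finset.sum_congr rfl fun σ _ => Finset.sum_congr rfl fun τ _ => ?_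
    rw [Finset.prod_mul_distrib]
    simp only [Matrix.submatrix_apply, id_eq]
    push_cast
    ring
  simp_rw [key]
  rw [Finset.sum_comm]
  have step2 : ∀ σ : Equiv.Perm (Fin m),
      (∑ g : Fin m → Fin n, ∑ τ : Equiv.Perm (Fin m),
        ((Equiv.Perm.sign σ : ℤ) * (Equiv.Perm.sign τ : ℤ)) *
          ∏ j, B (σ j) (g j) * B (τ j) (g j)) = (B * Bᵀ).det := by
    intro σ
    rw [Finset.sum_comm]
    have inner : ∀ τ : Equiv.Perm (Fin m),
        (∑ g : Fin m → Fin n, ∏ j, B (σ j) (g j) * B (τ j) (g j))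
          = ∏ j, (B * Bᵀ) (σ j) (τ j) := by
      intro τ
      rw [← Fintype.prod_sum (fun (j : Fin m) (k : Fin n) => B (σ j) k * B (τ j) k)]
      refine Finset.prod_congr rfl fun j _ => ?_
      simp [Matrix.mul_apply]
    simp_rw [← Finset.mul_sum, inner]
    -- reindex τ := ρ * σ
    rw [← Equiv.sum_comp (Equiv.mulRight σ)
      (fun τ => ((Equiv.Perm.sign σ : ℤ) * (Equiv.Perm.sign τ : ℤ)) *
        ∏ j, (B * Bᵀ) (σ j) (τ j))]
    have : ∀ ρ : Equiv.Perm (Fin m),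
        ((Equiv.Perm.sign σ : ℤ) * (Equiv.Perm.sign (ρ * σ) : ℤ)) *
          ∏ j, (B * Bᵀ) (σ j) ((ρ * σ) j)
        = (Equiv.Perm.sign ρ : ℤ) * ∏ i, (B * Bᵀ) i (ρ i) := by
      intro ρ
      have hprod : (∏ j, (B * Bᵀ) (σ j) ((ρ * σ) j)) = ∏ i, (B * Bᵀ) i (ρ i) :=
        Equiv.prod_comp σ (fun i => (B * Bᵀ) i (ρ i))
      have hsign : ((Equiv.Perm.sign σ : ℤ) * (Equiv.Perm.sign (ρ * σ) : ℤ))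
          = (Equiv.Perm.sign ρ : ℤ) := by
        rw [Equiv.Perm.sign_mul]
        push_cast
        ring_nf
        rw [show ((Equiv.Perm.sign σ : ℤˣ) : ℤ) ^ 2 = 1 by
          rw [← Units.val_pow_eq_pow_val, Int.units_sq, Units.val_one]]
        ring
      rw [hprod, hsign]
    simp_rw [Equiv.coe_mulRight, this]
    rw [← Matrix.det_transpose (B * Bᵀ), Matrix.det_apply']
    rfl
  rw [Finset.sum_congr rfl fun σ _ => step2 σ, Finset.sum_const, Finset.card_univ,
    Fintype.card_perm, Fintype.card_fin, nsmul_eq_mul]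

lemma trace_eq_sum_eigenvalues {m : ℕ} (G : Matrix (Fin m) (Fin m) ℝ)
    (hH : G.IsHermitian) : G.trace = ∑ i, hH.eigenvalues i := by
  set U : Matrix (Fin m) (Fin m) ℝ := (Matrix.IsHermitian.eigenvectorUnitary hH : Matrix (Fin m) (Fin m) ℝ)
  have hspec := hH.spectral_theorem
  calc G.trace
      = (U * Matrix.diagonal (RCLike.ofReal ∘ hH.eigenvalues) * star U).trace := by
        rw [Unitary.conjStarAlgAut_apply] at hspec
        rw [← hspec]
    _ = (star U * U * Matrix.diagonal (RCLike.ofReal ∘ hH.eigenvalues)).trace := by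
        rw [Matrix.trace_mul_cycle]
    _ = ∑ i, hH.eigenvalues i := by
        rw [Unitary.coe_star_mul_self, one_mul, Matrix.trace_diagonal]
        simp

lemma amgm_pow {m : ℕ} (hm : 0 < m) (c : ℝ) (hc : 0 ≤ c) (lam : Fin m → ℝ)
    (h0 : ∀ i, 0 ≤ lam i) (hsum : ∑ i, lam i ≤ m * c) : ∏ i, lam i ≤ c ^ m := by
  have hm' : (m : ℝ) ≠ 0 := Nat.cast_ne_zero.mpr hm.ne'
  have hgm : ∏ i, lam i ^ ((m : ℝ)⁻¹) ≤ ∑ i, (m : ℝ)⁻¹ * lam i := by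
    refine Real.geom_mean_le_arith_mean_weighted Finset.univ _ _
      (fun i _ => by positivity) ?_ (fun i _ => h0 i)
    simp [Finset.sum_const, Finset.card_univ, hm']
  have hle : ∏ i, lam i ^ ((m : ℝ)⁻¹) ≤ c := by
    refine hgm.trans ?_
    rw [← Finset.mul_sum]
    rw [inv_mul_le_iff₀ (by positivity)]
    linarith [hsum]
  have hrw : (∏ i, lam i ^ ((m : ℝ)⁻¹)) ^ m = ∏ i, lam i := by
    rw [← Finset.prod_pow]
    refine Finset.prod_congr rfl fun i _ => ?_
    rw [← Real.rpow_natCast (lam i ^ ((m:ℝ)⁻¹)) m, ← Real.rpow_mul (h0 i),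
      inv_mul_cancel₀ hm', Real.rpow_one]
  calc ∏ i, lam i = (∏ i, lam i ^ ((m : ℝ)⁻¹)) ^ m := hrw.symm
    _ ≤ c ^ m := pow_le_pow_left₀ (Finset.prod_nonneg fun i _ =>
        Real.rpow_nonneg (h0 i) _) hle m

lemma det_gram_le {m n : ℕ} (hm : 0 < m) (B : Matrix (Fin m) (Fin n) ℤ)
    (hB : ∀ i j, B i j = 1 ∨ B i j = -1) : (B * Bᵀ).det ≤ (n : ℤ) ^ m := by
  set C : Matrix (Fin m) (Fin n) ℝ := B.map (Int.cast) with hC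
  have hcast : (((B * Bᵀ).det : ℤ) : ℝ) = (C * Cᵀ).det := by
    rw [show (((B * Bᵀ).det : ℤ) : ℝ) = (Int.castRingHom ℝ) (B * Bᵀ).det from rfl,
      RingHom.map_det (Int.castRingHom ℝ)]
    congr 1
    ext i j
    simp [Matrix.mul_apply, hC, Matrix.map_apply]
  have hpsd : (C * Cᵀ).PosSemidef := by
    have := Matrix.posSemidef_self_mul_conjTranspose C
    rwa [Matrix.conjTranspose_eq_transpose_of_trivial] at this
  have hH : (C * Cᵀ).IsHermitian := hpsd.1
  have htr : (C * Cᵀ).trace = (m : ℝ) * n := by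
    rw [Matrix.trace]
    have : ∀ i, (C * Cᵀ).diag i = n := by
      intro i
      simp only [Matrix.diag_apply, Matrix.mul_apply, Matrix.transpose_apply]
      have : ∀ k, C i k * C i k = 1 := by
        intro k
        rcases hB i k with h | h <;> simp [hC, h]
      simp [this]
    simp only [Matrix.diag_apply] at this
    simp [this, Finset.sum_const, Finset.card_univ]
  have hdet : (C * Cᵀ).det = ∏ i, hH.eigenvalues i := by
    have := hH.det_eq_prod_eigenvalues
    simpa using this
  have hbound : (C * Cᵀ).det ≤ (n : ℝ) ^ m := by
    rw [hdet]
    refine amgm_pow hm (n : ℝ) (by positivity) _ (fun i => hpsd.eigenvalues_nonneg i) ?_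
    rw [← trace_eq_sum_eigenvalues _ hH, htr]
  have := hcast ▸ hbound
  exact_mod_cast this

lemma fact_mul_sum_strictMono (m n : ℕ) (B : Matrix (Fin m) (Fin n) ℤ) :
    (Nat.factorial m : ℤ) *
        ∑ g : {g : Fin m → Fin n // StrictMono g}, (B.submatrix id g.1).det ^ 2
      = ∑ g : Fin m → Fin n, (B.submatrix id g).det ^ 2 := by
  classical
  have hzero : ∀ g : Fin m → Fin n, ¬ Function.Injective g →
      (B.submatrix id g).det = 0 := by
    intro g hg
    rw [Function.not_injective_iff] at hg
    obtain ⟨a, b, hab, hne⟩ := hg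
    exact Matrix.det_zero_of_column_eq hne fun k => by
      simp [Matrix.submatrix_apply, hab]
  have hsplit : ∑ g : Fin m → Fin n, (B.submatrix id g).det ^ 2
      = ∑ g : {g : Fin m → Fin n // Function.Injective g},
          (B.submatrix id g.1).det ^ 2 := by
    rw [← Finset.sum_filter_add_sum_filter_not Finset.univ
      (fun g : Fin m → Fin n => Function.Injective g)]
    have h0 : ∑ g ∈ Finset.filter (fun g : Fin m → Fin n => ¬ Function.Injective g)
        Finset.univ, (B.submatrix id g).det ^ 2 = 0 :=
      Finset.sum_eq_zero (fun g hg => by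
        rw [hzero g (Finset.mem_filter.mp hg).2]; ring)
    rw [h0, add_zero]
    exact Finset.sum_subtype _ (by simp) _
  rw [hsplit, ← Fintype.sum_equiv (monoPermEquiv m n)
      (fun p => (B.submatrix id ((monoPermEquiv m n) p).1).det ^ 2)
      (fun g => (B.submatrix id g.1).det ^ 2) (fun p => rfl)]
  have happ : ∀ (σ : Equiv.Perm (Fin m)) (g : {g : Fin m → Fin n // StrictMono g}),
      ((monoPermEquiv m n) (σ, g)).1 = g.1 ∘ σ := fun σ g => rfl
  rw [Fintype.sum_prod_type]
  have hterm : ∀ (σ : Equiv.Perm (Fin m)) (g : {g : Fin m → Fin n // StrictMono g}),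
      (B.submatrix id (((monoPermEquiv m n) (σ, g)).1)).det ^ 2
        = (B.submatrix id g.1).det ^ 2 := by
    intro σ g
    rw [happ]
    have hsub : B.submatrix id (g.1 ∘ σ) = (B.submatrix id g.1).submatrix id σ := by
      rw [Matrix.submatrix_submatrix]
      rfl
    rw [hsub, Matrix.det_permute', mul_pow]
    norm_num [← Units.val_pow_eq_pow_val, Int.units_sq]
  simp_rw [hterm]
  rw [Finset.sum_const, Finset.card_univ, Fintype.card_perm, Fintype.card_fin,
    nsmul_eq_mul]

/-- The sum of squared minors of order `m` of an `n × n` `{±1}`-matrix `A`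
(over all choices of `m` rows and `m` columns, i.e. all pairs of strictly
monotone index maps `Fin m → Fin n`) is at most `n^m * C(n,m)`. -/
theorem sum_sq_minors_le (n m : ℕ) (hm : 1 < m) (hmn : m ≤ n)
    (A : Matrix (Fin n) (Fin n) ℤ) (hA : ∀ i j, A i j = 1 ∨ A i j = -1) :
    ∑ f : {f : Fin m → Fin n // StrictMono f},
      ∑ g : {g : Fin m → Fin n // StrictMono g},
        (A.submatrix f.1 g.1).det ^ 2 ≤ (n : ℤ) ^ m * (n.choose m : ℤ) := by
  have hm0 : 0 < m := hm.trans_le' (by norm_num)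
  have hinner : ∀ f : {f : Fin m → Fin n // StrictMono f},
      ∑ g : {g : Fin m → Fin n // StrictMono g},
        (A.submatrix f.1 g.1).det ^ 2 ≤ (n : ℤ) ^ m := by
    intro f
    set B : Matrix (Fin m) (Fin n) ℤ := A.submatrix f.1 id with hB
    have hBpm : ∀ i j, B i j = 1 ∨ B i j = -1 := fun i j => hA (f.1 i) j
    have hsub : ∀ g : Fin m → Fin n, A.submatrix f.1 g = B.submatrix id g := by
      intro g
      rw [hB, Matrix.submatrix_submatrix]
      rfl
    have heq : (Nat.factorial m : ℤ) *
        ∑ g : {g : Fin m → Fin n // StrictMono g}, (A.submatrix f.1 g.1).det ^ 2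
        = (Nat.factorial m : ℤ) * (B * Bᵀ).det := by
      simp_rw [hsub]
      rw [fact_mul_sum_strictMono, cauchy_binet_sq]
    have hcancel : ∑ g : {g : Fin m → Fin n // StrictMono g},
        (A.submatrix f.1 g.1).det ^ 2 = (B * Bᵀ).det :=
      mul_left_cancel₀ (by exact_mod_cast (Nat.factorial_pos m).ne') heq
    rw [hcancel]
    exact det_gram_le hm0 B hBpm
  calc ∑ f : {f : Fin m → Fin n // StrictMono f},
      ∑ g : {g : Fin m → Fin n // StrictMono g}, (A.submatrix f.1 g.1).det ^ 2
      ≤ ∑ _f : {f : Fin m → Fin n // StrictMono f}, (n : ℤ) ^ m :=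
        Finset.sum_le_sum fun f _ => hinner f
    _ = (n : ℤ) ^ m * (n.choose m : ℤ) := by
        rw [Finset.sum_const, Finset.card_univ, card_strictMono_fin, nsmul_eq_mul,
          mul_comm]
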